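/- Let G be a finite abelian group and let S be an indexed sequence over G. Then S is a subset of some UFIS over G if and only if for every two zero-sum subsets U and V of S, the intersection U ∩ V is also zero-sum (the empty set counting as zero-sum). -/

import Mathlib

open Finset

def IsIndexedSeq {G : Type*} [AddCommGroup G] (S : Finset (G × ℕ)) : Prop :=
  ∀ x ∈ S, x.1 ≠ 0

def seqSum {G : Type*} [AddCommGroup G] (S : Finset (G × ℕ)) : G :=
  ∑ x ∈ S, x.1

noncomputable def crossNum {G : Type*} [AddCommGroup G] (S : Finset (G × ℕ)) : ℝ :=
  ∑ x ∈ S, (1 : ℝ) / (addOrderOf x.1 : ℝ)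

def ZeroSumFree {G : Type*} [AddCommGroup G] (S : Finset (G × ℕ)) : Prop :=
  ∀ T ⊆ S, T.Nonempty → seqSum T ≠ 0

def IsIrreducibleSeq {G : Type*} [AddCommGroup G] (S : Finset (G × ℕ)) : Prop :=
  S.Nonempty ∧ seqSum S = 0 ∧ ∀ T ⊆ S, T.Nonempty → T ≠ S → seqSum T ≠ 0

def IsFactorization {G : Type*} [AddCommGroup G] (S : Finset (G × ℕ))
    (F : Finset (Finset (G × ℕ))) : Prop :=
  (∀ A ∈ F, IsIrreducibleSeq A) ∧
    (∀ A ∈ F, ∀ B ∈ F, A ≠ B → Disjoint A B) ∧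
    (∀ x, x ∈ S ↔ ∃ A ∈ F, x ∈ A)

def IsUFIS {G : Type*} [AddCommGroup G] (S : Finset (G × ℕ)) : Prop :=
  IsIndexedSeq S ∧ seqSum S = 0 ∧ ∃! F, IsFactorization S F

noncomputable def littleK (G : Type*) [AddCommGroup G] : ℝ :=
  sSup {x : ℝ | ∃ S : Finset (G × ℕ), IsIndexedSeq S ∧ ZeroSumFree S ∧ crossNum S = x}

noncomputable def bigK (G : Type*) [AddCommGroup G] : ℝ :=
  sSup {x : ℝ | ∃ S : Finset (G × ℕ), IsIndexedSeq S ∧ IsIrreducibleSeq S ∧ crossNum S = x}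

noncomputable def K1 (G : Type*) [AddCommGroup G] : ℝ :=
  sSup {x : ℝ | ∃ S : Finset (G × ℕ), IsUFIS S ∧ crossNum S = x}

def DenseZSF {G : Type*} [AddCommGroup G] (S : Finset (G × ℕ)) : Prop :=
  IsIndexedSeq S ∧ ZeroSumFree S ∧ crossNum S = littleK G ∧
    ∀ T : Finset (G × ℕ), IsIndexedSeq T → ZeroSumFree T → crossNum T = littleK G →
      S.card ≤ T.card

def DenseUFIS {G : Type*} [AddCommGroup G] (S : Finset (G × ℕ)) : Prop :=
  IsUFIS S ∧ crossNum S = K1 G ∧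
    ∀ T : Finset (G × ℕ), IsUFIS T → crossNum T = K1 G → S.card ≤ T.card

def WidePrime (p n : ℕ) : Prop :=
  ¬ p ∣ n ∧
    (p : ℝ) / ((p : ℝ) - 1) ≥
      ∏ q ∈ n.primeFactors,
        ((q : ℝ) ^ (n.factorization q + 1) - 1) /
          ((q : ℝ) ^ (n.factorization q + 1) - (q : ℝ) ^ (n.factorization q))

def Wide2Prime (p n : ℕ) : Prop :=
  ¬ p ∣ n ∧
    ((p : ℝ) ^ 2 + 2 * (p : ℝ) - 2) / (p : ℝ) ^ 2 ≥
      ∏ q ∈ n.primeFactors,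
        ((q : ℝ) ^ (n.factorization q + 1) - 1) /
          ((q : ℝ) ^ (n.factorization q + 1) - (q : ℝ) ^ (n.factorization q))

def IsWideNat (n : ℕ) : Prop :=
  0 < n ∧ ∀ q ∈ n.primeFactors,
    WidePrime q (∏ q' ∈ n.primeFactors.filter (fun q' => q < q'), q' ^ n.factorization q')

def Is2WideNat (n : ℕ) : Prop :=
  0 < n ∧ ∀ q ∈ n.primeFactors,
    Wide2Prime q (∏ q' ∈ n.primeFactors.filter (fun q' => q < q'), q' ^ n.factorization q')


set_option linter.unusedSectionVars false

section H
variable {G : Type*} [AddCommGroup G] [DecidableEq G]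

lemma seqSum_empty : seqSum (∅ : Finset (G × ℕ)) = 0 := rfl

lemma seqSum_sdiff {U S : Finset (G × ℕ)} (h : U ⊆ S) :
    seqSum (S \ U) = seqSum S - seqSum U := by
  unfold seqSum; rw [Finset.sum_sdiff_eq_sub h]

lemma factor_blocks_subset {S : Finset (G × ℕ)} {F : Finset (Finset (G × ℕ))}
    (hF : IsFactorization S F) {A : Finset (G × ℕ)} (hA : A ∈ F) : A ⊆ S := by
  intro x hx
  exact (hF.2.2 x).2 ⟨A, hA, hx⟩

lemma exists_factorization :
    ∀ S : Finset (G × ℕ), seqSum S = 0 → ∃ F, IsFactorization S F := by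
  intro S
  induction S using Finset.strongInduction with
  | _ S ih =>
    intro hz
    rcases S.eq_empty_or_nonempty with rfl | hne
    · refine ⟨∅, ?_, ?_, ?_⟩ <;> simp
    · classical
      set C := S.powerset.filter (fun U => U.Nonempty ∧ seqSum U = 0) with hC
      have hSC : S ∈ C := by simp [hC, hne, hz]
      obtain ⟨A, hAC, hAmin⟩ := C.exists_min_image Finset.card ⟨S, hSC⟩
      simp only [hC, mem_filter, mem_powerset] at hAC
      obtain ⟨hAS, hAne, hA0⟩ := hAC
      have hAirr : IsIrreducibleSeq A := by
        refine ⟨hAne, hA0, ?_⟩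
        intro T hTA hTne hTA' hT0
        have hTC : T ∈ C := by
          simp only [hC, mem_filter, mem_powerset]
          exact ⟨hTA.trans hAS, hTne, hT0⟩
        have := hAmin T hTC
        exact hTA' (Finset.eq_of_subset_of_card_le hTA this)
      have hlt : S \ A ⊂ S := Finset.sdiff_ssubset hAS hAne
      have hz' : seqSum (S \ A) = 0 := by
        rw [seqSum_sdiff hAS, hz, hA0, sub_zero]
      obtain ⟨F', hF'⟩ := ih _ hlt hz'
      have hAnotF : A ∉ F' := by
        intro h
        have := factor_blocks_subset hF' h
        obtain ⟨x, hx⟩ := hAne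
        exact (Finset.mem_sdiff.mp (this hx)).2 (hx)
      refine ⟨insert A F', ?_, ?_, ?_⟩
      · intro B hB
        rcases Finset.mem_insert.mp hB with rfl | hB
        · exact hAirr
        · exact hF'.1 B hB
      · have key : ∀ B ∈ F', Disjoint A B := by
          intro B hB
          have hsub := factor_blocks_subset hF' hB
          exact Finset.disjoint_left.mpr fun x hx hx' =>
            (Finset.mem_sdiff.mp (hsub hx')).2 hx
        intro B hB B' hB' hne'
        rcases Finset.mem_insert.mp hB with h1 | h1
        · rcases Finset.mem_insert.mp hB' with h2 | h2
          · exact absurd (h1.trans h2.symm) hne'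
          · exact h1 ▸ key B' h2
        · rcases Finset.mem_insert.mp hB' with h2 | h2
          · exact h2 ▸ (key B h1).symm
          · exact hF'.2.1 B h1 B' h2 hne'
      · intro x
        constructor
        · intro hx
          by_cases hxA : x ∈ A
          · exact ⟨A, Finset.mem_insert_self _ _, hxA⟩
          · obtain ⟨B, hB, hxB⟩ := (hF'.2.2 x).1 (Finset.mem_sdiff.mpr ⟨hx, hxA⟩)
            exact ⟨B, Finset.mem_insert_of_mem hB, hxB⟩
        · rintro ⟨B, hB, hxB⟩
          rcases Finset.mem_insert.mp hB with rfl | hB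
          · exact hAS hxB
          · exact (Finset.mem_sdiff.mp (factor_blocks_subset hF' hB hxB)).1
end H

section H2
variable {G : Type*} [AddCommGroup G] [DecidableEq G]

lemma blocks_aligned {T : Finset (G × ℕ)} {F : Finset (Finset (G × ℕ))}
    (hT0 : seqSum T = 0) (hF : IsFactorization T F)
    (huniq : ∀ F', IsFactorization T F' → F' = F)
    {U : Finset (G × ℕ)} (hUT : U ⊆ T) (hU0 : seqSum U = 0) :
    ∀ A ∈ F, A ⊆ U ∨ Disjoint A U := by
  classical
  have hC0 : seqSum (T \ U) = 0 := by rw [seqSum_sdiff hUT, hT0, hU0, sub_zero]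
  obtain ⟨FU, hFU⟩ := exists_factorization U hU0
  obtain ⟨FC, hFC⟩ := exists_factorization (T \ U) hC0
  have hcross : ∀ A ∈ FU, ∀ B ∈ FC, Disjoint A B := by
    intro A hA B hB
    have h1 := factor_blocks_subset hFU hA
    have h2 := factor_blocks_subset hFC hB
    exact Finset.disjoint_left.mpr fun x hx hx' =>
      (Finset.mem_sdiff.mp (h2 hx')).2 (h1 hx)
  have hF' : IsFactorization T (FU ∪ FC) := by
    refine ⟨?_, ?_, ?_⟩
    · intro A hA
      rcases Finset.mem_union.mp hA with h | h
      · exact hFU.1 A h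
      · exact hFC.1 A h
    · intro A hA B hB hne
      rcases Finset.mem_union.mp hA with h1 | h1 <;>
        rcases Finset.mem_union.mp hB with h2 | h2
      · exact hFU.2.1 A h1 B h2 hne
      · exact hcross A h1 B h2
      · exact (hcross B h2 A h1).symm
      · exact hFC.2.1 A h1 B h2 hne
    · intro x
      constructor
      · intro hx
        by_cases hxU : x ∈ U
        · obtain ⟨A, hA, hxA⟩ := (hFU.2.2 x).1 hxU
          exact ⟨A, Finset.mem_union_left _ hA, hxA⟩
        · obtain ⟨A, hA, hxA⟩ := (hFC.2.2 x).1 (Finset.mem_sdiff.mpr ⟨hx, hxU⟩)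
          exact ⟨A, Finset.mem_union_right _ hA, hxA⟩
      · rintro ⟨A, hA, hxA⟩
        rcases Finset.mem_union.mp hA with h | h
        · exact hUT (factor_blocks_subset hFU h hxA)
        · exact (Finset.mem_sdiff.mp (factor_blocks_subset hFC h hxA)).1
  have heq := huniq _ hF'
  intro A hA
  rw [← heq] at hA
  rcases Finset.mem_union.mp hA with h | h
  · exact Or.inl (factor_blocks_subset hFU h)
  · exact Or.inr (Finset.disjoint_left.mpr fun x hx hx' =>
      (Finset.mem_sdiff.mp (factor_blocks_subset hFC h hx)).2 hx')

lemma forward_dir {T : Finset (G × ℕ)} (hT : IsUFIS T)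
    {U V : Finset (G × ℕ)} (hUT : U ⊆ T) (hVT : V ⊆ T)
    (hU0 : seqSum U = 0) (hV0 : seqSum V = 0) : seqSum (U ∩ V) = 0 := by
  classical
  obtain ⟨hTind, hT0, F, hF, huniq⟩ := hT
  have halU := blocks_aligned hT0 hF huniq hUT hU0
  have halV := blocks_aligned hT0 hF huniq hVT hV0
  set P := F.filter (fun A => A ⊆ U ∧ A ⊆ V) with hP
  have hcov : U ∩ V = P.biUnion id := by
    ext x
    simp only [Finset.mem_biUnion, hP, Finset.mem_filter, id]
    constructor
    · intro hx
      obtain ⟨hxU, hxV⟩ := Finset.mem_inter.mp hx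
      obtain ⟨A, hA, hxA⟩ := (hF.2.2 x).1 (hUT hxU)
      have h1 : A ⊆ U := by
        rcases halU A hA with h | h
        · exact h
        · exact absurd hxU (Finset.disjoint_left.mp h hxA)
      have h2 : A ⊆ V := by
        rcases halV A hA with h | h
        · exact h
        · exact absurd hxV (Finset.disjoint_left.mp h hxA)
      exact ⟨A, ⟨hA, h1, h2⟩, hxA⟩
    · rintro ⟨A, ⟨_, h1, h2⟩, hxA⟩
      exact Finset.mem_inter.mpr ⟨h1 hxA, h2 hxA⟩
  have hdisj : (↑P : Set (Finset (G × ℕ))).PairwiseDisjoint id := by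
    intro A hA B hB hne
    simp only [hP, Finset.coe_filter, Set.mem_setOf_eq] at hA hB
    exact hF.2.1 A hA.1 B hB.1 hne
  rw [hcov]
  unfold seqSum
  rw [Finset.sum_biUnion hdisj]
  refine Finset.sum_eq_zero fun A hA => ?_
  exact hF.1 A (Finset.mem_filter.mp hA).1 |>.2.1

end H2

section H3
variable {G : Type*} [AddCommGroup G] [DecidableEq G]
variable {S : Finset (G × ℕ)}

lemma block_eq
    (hint : ∀ U ⊆ S, ∀ V ⊆ S, seqSum U = 0 → seqSum V = 0 → seqSum (U ∩ V) = 0)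
    {A A' : Finset (G × ℕ)} (hA : IsIrreducibleSeq A) (hA' : IsIrreducibleSeq A')
    (hAS : A ⊆ S) (hA'S : A' ⊆ S) (hx : (A ∩ A').Nonempty) : A = A' := by
  have h0 := hint A hAS A' hA'S hA.2.1 hA'.2.1
  have h1 : A ∩ A' = A := by
    by_contra h
    exact hA.2.2 _ Finset.inter_subset_left hx h h0
  have h2 : A ∩ A' = A' := by
    by_contra h
    exact hA'.2.2 _ Finset.inter_subset_right hx h h0
  rw [← h1, h2]

lemma sup_zero_sum
    (hint : ∀ U ⊆ S, ∀ V ⊆ S, seqSum U = 0 → seqSum V = 0 → seqSum (U ∩ V) = 0) :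
    ∀ 𝒰 : Finset (Finset (G × ℕ)), (∀ U ∈ 𝒰, U ⊆ S ∧ seqSum U = 0) →
      𝒰.sup id ⊆ S ∧ seqSum (𝒰.sup id) = 0 := by
  classical
  intro 𝒰
  induction 𝒰 using Finset.induction_on with
  | empty => intro _; simp [seqSum]
  | insert _ _ hUn ih =>
    rename_i U 𝒰'
    intro h
    have hU := h U (Finset.mem_insert_self _ _)
    have hrest := ih fun V hV => h V (Finset.mem_insert_of_mem hV)
    rw [Finset.sup_insert]
    have hsub : U ⊔ 𝒰'.sup id ⊆ S := by
      simp only [Finset.sup_eq_union]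
      exact Finset.union_subset hU.1 hrest.1
    refine ⟨hsub, ?_⟩
    have key : seqSum (U ∪ 𝒰'.sup id) + seqSum (U ∩ 𝒰'.sup id) =
        seqSum U + seqSum (𝒰'.sup id) := by
      unfold seqSum; exact Finset.sum_union_inter
    have hi := hint U hU.1 (𝒰'.sup id) hrest.1 hU.2 hrest.2
    simp only [Finset.sup_eq_union] at *
    rw [hU.2, hrest.2, hi, add_zero, add_zero] at key
    exact key

end H3

section H4
variable {G : Type*} [AddCommGroup G] [DecidableEq G]

lemma backward_dir {S : Finset (G × ℕ)} (hS : IsIndexedSeq S)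
    (hint : ∀ U ⊆ S, ∀ V ⊆ S, seqSum U = 0 → seqSum V = 0 → seqSum (U ∩ V) = 0) :
    ∃ T : Finset (G × ℕ), S ⊆ T ∧ IsUFIS T := by
  classical
  set Z := ((S.powerset.filter (fun U => seqSum U = 0)).sup id : Finset (G × ℕ)) with hZdef
  have hprops : Z ⊆ S ∧ seqSum Z = 0 := by
    apply sup_zero_sum hint
    intro U hU
    simp only [Finset.mem_filter, Finset.mem_powerset] at hU
    exact hU
  obtain ⟨hZS, hZ0⟩ := hprops
  have hZsub : ∀ U ⊆ S, seqSum U = 0 → U ⊆ Z := by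
    intro U hU h0
    exact Finset.le_sup (f := id)
      (Finset.mem_filter.mpr ⟨Finset.mem_powerset.mpr hU, h0⟩)
  by_cases hcase : S \ Z = ∅
  · -- S = Z, so S is already zero-sum
    have hSZ : S ⊆ Z := by
      intro x hx
      by_contra h
      exact (Finset.eq_empty_iff_forall_notMem.mp hcase x)
        (Finset.mem_sdiff.mpr ⟨hx, h⟩)
    have hSeq : S = Z := Finset.Subset.antisymm hSZ hZS
    have hS0 : seqSum S = 0 := by rw [hSeq]; exact hZ0
    have mem_imp : ∀ F1 F2 : Finset (Finset (G × ℕ)), IsFactorization S F1 →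
        IsFactorization S F2 → ∀ A ∈ F1, A ∈ F2 := by
      intro F1 F2 h1 h2 A hA
      have hAirr := h1.1 A hA
      obtain ⟨x, hx⟩ := hAirr.1
      obtain ⟨A', hA', hxA'⟩ := (h2.2.2 x).1 (factor_blocks_subset h1 hA hx)
      have heq := block_eq hint hAirr (h2.1 A' hA') (factor_blocks_subset h1 hA)
        (factor_blocks_subset h2 hA') ⟨x, Finset.mem_inter.mpr ⟨hx, hxA'⟩⟩
      rw [heq]; exact hA'
    obtain ⟨F0, hF0⟩ := exists_factorization S hS0
    refine ⟨S, Finset.Subset.refl S, hS, hS0, F0, hF0, ?_⟩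
    intro F1 hF1
    exact Finset.Subset.antisymm (fun A hA => mem_imp F1 F0 hF1 hF0 A hA)
      (fun A hA => mem_imp F0 F1 hF0 hF1 A hA)
  · have hne : (S \ Z).Nonempty := Finset.nonempty_iff_ne_empty.mpr hcase
    have hg : seqSum (S \ Z) ≠ 0 := by
      intro h
      obtain ⟨x, hx⟩ := hne
      exact (Finset.mem_sdiff.mp hx).2 (hZsub _ Finset.sdiff_subset h hx)
    set w : G × ℕ := (-(seqSum (S \ Z)), S.sup (fun x => x.2) + 1) with hwdef
    have hwS : w ∉ S := by
      intro h
      have := Finset.le_sup (f := fun x : G × ℕ => x.2) h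
      simp only [hwdef] at this
      omega
    set T := insert w S with hTdef
    have hST : S ⊆ T := Finset.subset_insert _ _
    have hSsum : seqSum S = seqSum (S \ Z) := by
      have := Finset.sum_sdiff (f := fun x : G × ℕ => x.1) hZS
      unfold seqSum at *
      rw [← this, hZ0, add_zero]
    have hT0 : seqSum T = 0 := by
      unfold seqSum
      rw [hTdef, Finset.sum_insert hwS]
      have : w.1 = -(seqSum (S \ Z)) := rfl
      rw [this, ← hSsum]
      show -(seqSum S) + seqSum S = 0
      abel
    have hTind : IsIndexedSeq T := by
      intro x hx
      rcases Finset.mem_insert.mp hx with rfl | hx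
      · show w.1 ≠ 0
        simpa [hwdef] using hg
      · exact hS x hx
    set B : Finset (G × ℕ) := insert w (S \ Z) with hBdef
    have hwB' : w ∉ S \ Z := fun h => hwS (Finset.mem_sdiff.mp h).1
    have hB0 : seqSum B = 0 := by
      unfold seqSum
      rw [hBdef, Finset.sum_insert hwB']
      show w.1 + seqSum (S \ Z) = 0
      rw [show w.1 = -(seqSum (S \ Z)) from rfl]
      abel
    have wblock : ∀ F : Finset (Finset (G × ℕ)), IsFactorization T F →
        ∀ A ∈ F, w ∈ A → A = B := by
      intro F hF A hA hwA
      have hAT : A ⊆ T := factor_blocks_subset hF hA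
      have hAirr := hF.1 A hA
      have hR0 : seqSum (T \ A) = 0 := by
        rw [seqSum_sdiff hAT, hT0, hAirr.2.1, sub_zero]
      have hRS : T \ A ⊆ S := by
        intro x hx
        obtain ⟨hxT, hxA⟩ := Finset.mem_sdiff.mp hx
        rcases Finset.mem_insert.mp hxT with rfl | h
        · exact absurd hwA hxA
        · exact h
      have hRZ : T \ A ⊆ Z := hZsub _ hRS hR0
      have hBA : B ⊆ A := by
        intro x hx
        rcases Finset.mem_insert.mp hx with rfl | hx
        · exact hwA
        · by_contra hxA
          have hxT : x ∈ T := hST (Finset.mem_sdiff.mp hx).1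
          exact (Finset.mem_sdiff.mp hx).2 (hRZ (Finset.mem_sdiff.mpr ⟨hxT, hxA⟩))
      have hD0 : seqSum (A \ B) = 0 := by
        rw [seqSum_sdiff hBA, hAirr.2.1, hB0, sub_zero]
      have hDne : A \ B ≠ A := by
        intro h
        have hw : w ∉ A \ B := fun hh =>
          (Finset.mem_sdiff.mp hh).2 (Finset.mem_insert_self _ _)
        rw [h] at hw
        exact hw hwA
      have hDemp : A \ B = ∅ := by
        by_contra h
        exact hAirr.2.2 _ Finset.sdiff_subset (Finset.nonempty_iff_ne_empty.mpr h)
          hDne hD0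
      exact Finset.Subset.antisymm (Finset.sdiff_eq_empty_iff_subset.mp hDemp) hBA
    have mem_imp : ∀ F1 F2 : Finset (Finset (G × ℕ)), IsFactorization T F1 →
        IsFactorization T F2 → ∀ A ∈ F1, A ∈ F2 := by
      intro F1 F2 h1 h2 A hA
      by_cases hwA : w ∈ A
      · have hA1 : A = B := wblock F1 h1 A hA hwA
        obtain ⟨A2, hA2, hwA2⟩ := (h2.2.2 w).1 (Finset.mem_insert_self _ _)
        rw [hA1, ← wblock F2 h2 A2 hA2 hwA2]
        exact hA2
      · have hAirr := h1.1 A hA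
        have hAS' : A ⊆ S := by
          intro x hx
          rcases Finset.mem_insert.mp (factor_blocks_subset h1 hA hx) with rfl | h
          · exact absurd hx hwA
          · exact h
        have hAZ : A ⊆ Z := hZsub _ hAS' hAirr.2.1
        obtain ⟨x, hx⟩ := hAirr.1
        obtain ⟨A', hA', hxA'⟩ := (h2.2.2 x).1 (hST (hAS' hx))
        have hwA' : w ∉ A' := by
          intro hw
          have hA'B := wblock F2 h2 A' hA' hw
          rw [hA'B, hBdef] at hxA'
          rcases Finset.mem_insert.mp hxA' with h | h
          · exact hwA (h ▸ hx)
          · exact (Finset.mem_sdiff.mp h).2 (hAZ hx)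
        have hA'S : A' ⊆ S := by
          intro y hy
          rcases Finset.mem_insert.mp (factor_blocks_subset h2 hA' hy) with rfl | h
          · exact absurd hy hwA'
          · exact h
        have heq := block_eq hint hAirr (h2.1 A' hA') hAS' hA'S
          ⟨x, Finset.mem_inter.mpr ⟨hx, hxA'⟩⟩
        rw [heq]; exact hA'
    obtain ⟨F0, hF0⟩ := exists_factorization T hT0
    refine ⟨T, hST, hTind, hT0, F0, hF0, ?_⟩
    intro F1 hF1
    exact Finset.Subset.antisymm (fun A hA => mem_imp F1 F0 hF1 hF0 A hA)
      (fun A hA => mem_imp F0 F1 hF0 hF1 A hA)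
end H4


theorem stmt7 (G : Type*) [AddCommGroup G] [Fintype G] [DecidableEq G]
    (S : Finset (G × ℕ)) (hS : IsIndexedSeq S) :
    (∃ T : Finset (G × ℕ), S ⊆ T ∧ IsUFIS T) ↔
      ∀ U ⊆ S, ∀ V ⊆ S, seqSum U = 0 → seqSum V = 0 → seqSum (U ∩ V) = 0 := by
  constructor
  · rintro ⟨T, hST, hT⟩ U hUS V hVS hU0 hV0
    exact forward_dir hT (hUS.trans hST) (hVS.trans hST) hU0 hV0
  · intro hint
    exact backward_dir hS hint
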